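/- Suppose 1/n ≪ ε_1, ε_2 ≪ 1 and ℓ ≤ ε_2 n. Let G be a graph on n vertices with minimum degree δ(G) ≥ (1 − ε_1)n. Then for any ℓ disjoint pairs of vertices (u_1,v_1), ..., (u_ℓ, v_ℓ) (all 2ℓ vertices distinct), the graph G together with the added edges u_1v_1, ..., u_ℓv_ℓ contains a Hamilton cycle passing through all ℓ of these added edges. -/

import Mathlib

open SimpleGraph List

set_option linter.unusedSectionVars false

namespace Stmt7Aux

attribute [local instance] Classical.propDecidable

variable {V : Type*} [Fintype V] [DecidableEq V] [Nonempty V]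

noncomputable def vdef (V : Type*) [Nonempty V] : V := Classical.arbitrary V

noncomputable def hB (l : List (List V)) (i : ℕ) : V := ((l.getD i []).head?).getD (vdef V)
noncomputable def tB (l : List (List V)) (i : ℕ) : V := ((l.getD i []).getLast?).getD (vdef V)

def bad (G : SimpleGraph V) (l : List (List V)) (i : ℕ) : Prop :=
  ¬ G.Adj (tB l i) (hB l ((i + 1) % l.length))

noncomputable def badCount (G : SimpleGraph V) (l : List (List V)) : ℕ :=
  ((Finset.range l.length).filter (bad G l)).card

lemma hB_eq {l : List (List V)} {i : ℕ} (h : i < l.length) :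
    hB l i = ((l[i]'h).head?).getD (vdef V) := by
  rw [hB, List.getD_eq_getElem _ _ h]

lemma tB_eq {l : List (List V)} {i : ℕ} (h : i < l.length) :
    tB l i = ((l[i]'h).getLast?).getD (vdef V) := by
  rw [tB, List.getD_eq_getElem _ _ h]

lemma some_hB {l : List (List V)} {i : ℕ} (h : i < l.length) (hne : l[i]'h ≠ []) :
    (l[i]'h).head? = some (hB l i) := by
  rw [hB_eq h, List.head?_eq_head hne]
  simp

lemma some_tB {l : List (List V)} {i : ℕ} (h : i < l.length) (hne : l[i]'h ≠ []) :
    (l[i]'h).getLast? = some (tB l i) := by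
  rw [tB_eq h, List.getLast?_eq_getLast hne]
  simp

lemma hB_mem {l : List (List V)} {i : ℕ} (h : i < l.length) (hne : l[i]'h ≠ []) :
    hB l i ∈ l[i]'h :=
  List.mem_of_mem_head? (some_hB h hne)

lemma tB_mem {l : List (List V)} {i : ℕ} (h : i < l.length) (hne : l[i]'h ≠ []) :
    tB l i ∈ l[i]'h :=
  List.mem_of_mem_getLast? (some_tB h hne)

/-- distinct blocks are disjoint when the flatten is nodup -/
lemma blocks_disjoint {l : List (List V)} (hnd : l.flatten.Nodup) {i j : ℕ}
    (hi : i < l.length) (hj : j < l.length) (hij : i ≠ j) :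
    List.Disjoint (l[i]'hi) (l[j]'hj) := by
  have hp := (List.nodup_flatten.1 hnd).2
  rw [List.pairwise_iff_getElem] at hp
  rcases Nat.lt_or_ge i j with h | h
  · exact hp i j hi hj h
  · exact fun x hx hx' => hp j i hj hi (by omega) hx' hx

lemma tB_injOn {l : List (List V)} (hnd : l.flatten.Nodup) (hne : ∀ b ∈ l, b ≠ [])
    {i j : ℕ} (hi : i < l.length) (hj : j < l.length) (h : tB l i = tB l j) : i = j := by
  by_contra hij
  exact blocks_disjoint hnd hi hj hij (tB_mem hi (hne _ (l.getElem_mem hi)))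
    (h ▸ tB_mem hj (hne _ (l.getElem_mem hj)))

lemma hB_injOn {l : List (List V)} (hnd : l.flatten.Nodup) (hne : ∀ b ∈ l, b ≠ [])
    {i j : ℕ} (hi : i < l.length) (hj : j < l.length) (h : hB l i = hB l j) : i = j := by
  by_contra hij
  exact blocks_disjoint hnd hi hj hij (hB_mem hi (hne _ (l.getElem_mem hi)))
    (h ▸ hB_mem hj (hne _ (l.getElem_mem hj)))

lemma mod_helper {m k a : ℕ} (hm : 0 < m) (ha : a < m) :
    (a + (m - k % m) + k) % m = a := by
  have h1 : k % m + m * (k / m) = k := Nat.mod_add_div k m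
  have h2 : k % m < m := Nat.mod_lt _ hm
  have h3 : a + (m - k % m) + k = a + m * (k / m + 1) := by
    have h4 : m * (k / m + 1) = m * (k / m) + m := by ring
    omega
  rw [h3, Nat.add_mul_mod_self_left, Nat.mod_eq_of_lt ha]

lemma hB_rotate {l : List (List V)} {k i : ℕ} (hi : i < l.length) :
    hB (l.rotate k) i = hB l ((i + k) % l.length) := by
  have h1 : i < (l.rotate k).length := by rwa [List.length_rotate]
  have h2 : (i + k) % l.length < l.length := Nat.mod_lt _ (by omega)
  rw [hB_eq h1, hB_eq h2, List.getElem_rotate]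

lemma tB_rotate {l : List (List V)} {k i : ℕ} (hi : i < l.length) :
    tB (l.rotate k) i = tB l ((i + k) % l.length) := by
  have h1 : i < (l.rotate k).length := by rwa [List.length_rotate]
  have h2 : (i + k) % l.length < l.length := Nat.mod_lt _ (by omega)
  rw [tB_eq h1, tB_eq h2, List.getElem_rotate]

lemma bad_rotate (G : SimpleGraph V) {l : List (List V)} {k i : ℕ} (hi : i < l.length) :
    bad G (l.rotate k) i ↔ bad G l ((i + k) % l.length) := by
  have hm : 0 < l.length := by omega
  have hmod : i + 1 ≤ l.length → True := fun _ => trivial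
  unfold bad
  rw [List.length_rotate, tB_rotate hi, hB_rotate (Nat.mod_lt (i+1) hm)]
  have : ((i + 1) % l.length + k) % l.length = ((i + k) % l.length + 1) % l.length := by
    rw [Nat.mod_add_mod, Nat.mod_add_mod]
    congr 1
    omega
  rw [this]

lemma badCount_rotate (G : SimpleGraph V) (l : List (List V)) (k : ℕ) :
    badCount G (l.rotate k) = badCount G l := by
  rcases Nat.eq_zero_or_pos l.length with h0 | hm
  · have : l = [] := List.length_eq_zero_iff.1 h0
    subst this; simp [badCount]
  unfold badCount
  rw [List.length_rotate]
  set m := l.length with hmdef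
  refine Finset.card_bij' (fun a _ => (a + k) % m) (fun b _ => (b + (m - k % m)) % m) ?_ ?_ ?_ ?_
  · intro a ha
    simp only [Finset.mem_filter, Finset.mem_range] at ha ⊢
    exact ⟨Nat.mod_lt _ hm, (bad_rotate G ha.1).1 ha.2⟩
  · intro b hb
    simp only [Finset.mem_filter, Finset.mem_range] at hb ⊢
    have h1 : (b + (m - k % m)) % m < m := Nat.mod_lt _ hm
    refine ⟨h1, ?_⟩
    rw [bad_rotate G h1, Nat.mod_add_mod, mod_helper hm hb.1]
    exact hb.2
  · intro a ha
    simp only [Finset.mem_filter, Finset.mem_range] at ha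
    show ((a + k) % m + (m - k % m)) % m = a
    rw [Nat.mod_add_mod]
    have : a + k + (m - k % m) = a + (m - k % m) + k := by omega
    rw [this, mod_helper hm ha.1]
  · intro b hb
    simp only [Finset.mem_filter, Finset.mem_range] at hb
    show ((b + (m - k % m)) % m + k) % m = b
    rw [Nat.mod_add_mod, mod_helper hm hb.1]

/-- the reversal operation: reverse the first `j+1` blocks (each block reversed too). -/
def opL (l : List (List V)) (j : ℕ) : List (List V) :=
  (l.take (j+1)).reverse.map List.reverse ++ l.drop (j+1)

lemma opL_length (l : List (List V)) (j : ℕ) (hj : j < l.length) :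
    (opL l j).length = l.length := by
  rw [opL, List.length_append, List.length_map, List.length_reverse, List.length_take,
    List.length_drop]
  omega

lemma opL_getD_low {l : List (List V)} {j i : ℕ} (hij : i ≤ j) (hj : j < l.length) :
    (opL l j).getD i [] = (l.getD (j - i) []).reverse := by
  have h2 : i < (opL l j).length := by rw [opL_length l j hj]; omega
  have h3 : j - i < l.length := by omega
  have h1 : i < ((l.take (j+1)).reverse.map List.reverse).length := by
    rw [List.length_map, List.length_reverse, List.length_take]; omega
  rw [List.getD_eq_getElem _ _ h2, List.getD_eq_getElem _ _ h3]
  simp only [opL]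
  rw [List.getElem_append_left h1, List.getElem_map, List.getElem_reverse]
  have e : (l.take (j+1)).length - 1 - i = j - i := by rw [List.length_take]; omega
  simp only [e, List.getElem_take]

lemma opL_getD_high {l : List (List V)} {j i : ℕ} (h1 : j < i) (h2 : i < l.length) :
    (opL l j).getD i [] = l.getD i [] := by
  have h3 : i < (opL l j).length := by rw [opL_length l j (by omega)]; omega
  have h4 : ((l.take (j+1)).reverse.map List.reverse).length = j + 1 := by
    rw [List.length_map, List.length_reverse, List.length_take]; omega
  rw [List.getD_eq_getElem _ _ h3, List.getD_eq_getElem _ _ h2]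
  simp only [opL]
  rw [List.getElem_append_right (by omega : ((l.take (j+1)).reverse.map List.reverse).length ≤ i),
    List.getElem_drop]
  congr 1
  omega

lemma opL_hB_low {l : List (List V)} {j i : ℕ} (hij : i ≤ j) (hj : j < l.length) :
    hB (opL l j) i = tB l (j - i) := by
  rw [hB, tB, opL_getD_low hij hj, List.head?_reverse]

lemma opL_tB_low {l : List (List V)} {j i : ℕ} (hij : i ≤ j) (hj : j < l.length) :
    tB (opL l j) i = hB l (j - i) := by
  rw [hB, tB, opL_getD_low hij hj, List.getLast?_reverse]

lemma opL_hB_high {l : List (List V)} {j i : ℕ} (h1 : j < i) (h2 : i < l.length) :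
    hB (opL l j) i = hB l i := by
  rw [hB, hB, opL_getD_high h1 h2]

lemma opL_tB_high {l : List (List V)} {j i : ℕ} (h1 : j < i) (h2 : i < l.length) :
    tB (opL l j) i = tB l i := by
  rw [tB, tB, opL_getD_high h1 h2]

lemma fix_step (G : SimpleGraph V) (d : ℕ)
    (hdeg : ∀ x : V, ((G.neighborFinset x)ᶜ).card ≤ d)
    (l : List (List V))
    (hne : ∀ b ∈ l, b ≠ []) (hnd : l.flatten.Nodup)
    (hm : 2 * d + 2 ≤ l.length)
    (hbad : bad G l (l.length - 1)) :
    ∃ l' : List (List V),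
      (∀ b ∈ l', b ∈ l ∨ b.reverse ∈ l) ∧
      (∀ b ∈ l, b ∈ l' ∨ b.reverse ∈ l') ∧
      l'.flatten ~ l.flatten ∧
      badCount G l' < badCount G l := by
  classical
  set m := l.length with hmdef
  have hm0 : 0 < m := by omega
  have hfind : ∃ j, j < m - 1 ∧ G.Adj (tB l (m-1)) (tB l j) ∧ G.Adj (hB l 0) (hB l (j + 1)) := by
    by_contra hcon
    push_neg at hcon
    set S1 := (Finset.range (m-1)).filter (fun j => ¬ G.Adj (tB l (m-1)) (tB l j)) with hS1
    set S2 := (Finset.range (m-1)).filter (fun j => ¬ G.Adj (hB l 0) (hB l (j+1))) with hS2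
    have hsub : Finset.range (m-1) ⊆ S1 ∪ S2 := by
      intro j hj
      rw [Finset.mem_range] at hj
      rcases Classical.em (G.Adj (tB l (m-1)) (tB l j)) with h1 | h1
      · exact Finset.mem_union_right _ (Finset.mem_filter.2 ⟨Finset.mem_range.2 hj, hcon j hj h1⟩)
      · exact Finset.mem_union_left _ (Finset.mem_filter.2 ⟨Finset.mem_range.2 hj, h1⟩)
    have h1 : S1.card ≤ d := by
      refine le_trans (Finset.card_le_card_of_injOn (fun j => tB l j) ?_ ?_) (hdeg (tB l (m-1)))
      · intro j hj
        rw [hS1, Finset.mem_coe, Finset.mem_filter, Finset.mem_range] at hj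
        rw [Finset.mem_coe, Finset.mem_compl, SimpleGraph.mem_neighborFinset]
        exact hj.2
      · intro j hj j' hj' hjj
        simp only [hS1, Finset.coe_filter, Set.mem_setOf_eq, Finset.mem_range] at hj hj'
        exact tB_injOn hnd hne (by omega) (by omega) hjj
    have h2 : S2.card ≤ d := by
      refine le_trans (Finset.card_le_card_of_injOn (fun j => hB l (j+1)) ?_ ?_) (hdeg (hB l 0))
      · intro j hj
        rw [hS2, Finset.mem_coe, Finset.mem_filter, Finset.mem_range] at hj
        rw [Finset.mem_coe, Finset.mem_compl, SimpleGraph.mem_neighborFinset]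
        exact hj.2
      · intro j hj j' hj' hjj
        simp only [hS2, Finset.coe_filter, Set.mem_setOf_eq, Finset.mem_range] at hj hj'
        have := hB_injOn hnd hne (i := j+1) (j := j'+1) (by omega) (by omega) hjj
        omega
    have hc1 := Finset.card_le_card hsub
    have hc2 := Finset.card_union_le S1 S2
    rw [Finset.card_range] at hc1
    omega
  obtain ⟨j, hj, hadj1, hadj2⟩ := hfind
  have hjm : j < m := by omega
  refine ⟨opL l j, ?_, ?_, ?_, ?_⟩
  · intro b hb
    simp only [opL] at hb
    rw [List.mem_append] at hb
    rcases hb with hb | hb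
    · rw [List.mem_map] at hb
      obtain ⟨c, hc, rfl⟩ := hb
      right
      rw [List.reverse_reverse]
      exact List.take_subset _ _ (List.mem_reverse.1 hc)
    · exact Or.inl (List.drop_subset _ _ hb)
  · intro b hb
    rw [← List.take_append_drop (j+1) l, List.mem_append] at hb
    rcases hb with hb | hb
    · right
      simp only [opL]
      rw [List.mem_append]
      exact Or.inl (List.mem_map.2 ⟨b, List.mem_reverse.2 hb, rfl⟩)
    · exact Or.inl (by simp only [opL]; rw [List.mem_append]; exact Or.inr hb)
  · simp only [opL]
    rw [List.flatten_append]
    have h1 : ((l.take (j+1)).reverse.map List.reverse).flatten = (l.take (j+1)).flatten.reverse := by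
      rw [List.map_reverse, ← List.reverse_flatten]
    rw [h1]
    calc (l.take (j+1)).flatten.reverse ++ (l.drop (j+1)).flatten
        ~ (l.take (j+1)).flatten ++ (l.drop (j+1)).flatten :=
          List.Perm.append_right _ (List.reverse_perm _)
      _ = l.flatten := by rw [← List.flatten_append, List.take_append_drop]
  · -- badCount decreases
    have hlen' : (opL l j).length = m := opL_length l j hjm
    have badA : ∀ i, i < j → (bad G (opL l j) i ↔ bad G l (j - 1 - i)) := by
      intro i hij
      unfold bad
      rw [hlen', ← hmdef]
      have e2 : (i+1) % m = i + 1 := Nat.mod_eq_of_lt (by omega)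
      have e4 : (j - 1 - i + 1) % m = j - i := by rw [Nat.mod_eq_of_lt (by omega)]; omega
      rw [e2, e4, opL_tB_low (by omega) hjm, opL_hB_low (by omega) hjm]
      have e5 : j - (i+1) = j - 1 - i := by omega
      rw [e5, G.adj_comm]
    have badC : ∀ i, j < i → i < m - 1 → (bad G (opL l j) i ↔ bad G l i) := by
      intro i h1 h2
      unfold bad
      rw [hlen', ← hmdef]
      rw [Nat.mod_eq_of_lt (show i+1 < m by omega),
        opL_tB_high h1 (by omega), opL_hB_high (by omega) (by omega)]
    have badj : ¬ bad G (opL l j) j := by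
      unfold bad
      rw [hlen', Nat.mod_eq_of_lt (show j+1 < m by omega),
        opL_tB_low le_rfl hjm, Nat.sub_self, opL_hB_high (by omega) (by omega)]
      exact not_not_intro hadj2
    have badm : ¬ bad G (opL l j) (m-1) := by
      unfold bad
      rw [hlen']
      have e0 : (m - 1 + 1) % m = 0 := by rw [Nat.sub_add_cancel (by omega), Nat.mod_self]
      rw [e0, opL_tB_high (by omega) (by omega), opL_hB_low (by omega) hjm]
      simpa using not_not_intro hadj1
    have hmem : (m-1) ∈ (Finset.range m).filter (bad G l) :=
      Finset.mem_filter.2 ⟨Finset.mem_range.2 (by omega), hbad⟩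
    have hcard : ((Finset.range m).filter (bad G (opL l j))).card ≤
        (((Finset.range m).filter (bad G l)).erase (m-1)).card := by
      apply Finset.card_le_card_of_injOn (fun i => if i < j then j - 1 - i else i)
      · intro i hi
        rw [Finset.mem_coe, Finset.mem_filter, Finset.mem_range] at hi
        obtain ⟨him, hbi⟩ := hi
        have hij : i ≠ j := fun h => badj (h ▸ hbi)
        have him1 : i ≠ m - 1 := fun h => badm (h ▸ hbi)
        show (if i < j then j - 1 - i else i) ∈ _
        rw [Finset.mem_coe, Finset.mem_erase, Finset.mem_filter, Finset.mem_range]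
        rcases Nat.lt_or_ge i j with hlt | hge
        · rw [if_pos hlt]
          exact ⟨by omega, by omega, (badA i hlt).1 hbi⟩
        · have hgt : j < i := by omega
          rw [if_neg (by omega : ¬ i < j)]
          exact ⟨him1, by omega, (badC i hgt (by omega)).1 hbi⟩
      · intro a ha b hb hab
        simp only [Finset.coe_filter, Set.mem_setOf_eq, Finset.mem_range] at ha hb
        have haj : a ≠ j := fun h => badj (h ▸ ha.2)
        have ham : a ≠ m - 1 := fun h => badm (h ▸ ha.2)
        have hbj : b ≠ j := fun h => badj (h ▸ hb.2)
        have hbm : b ≠ m - 1 := fun h => badm (h ▸ hb.2)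
        simp only at hab
        split_ifs at hab <;> omega
    calc badCount G (opL l j) = ((Finset.range m).filter (bad G (opL l j))).card := by
          rw [badCount, hlen']
      _ ≤ (((Finset.range m).filter (bad G l)).erase (m-1)).card := hcard
      _ < ((Finset.range m).filter (bad G l)).card := Finset.card_erase_lt_of_mem hmem
      _ = badCount G l := rfl

structure Cfg (H : SimpleGraph V) (l : List (List V)) : Prop where
  hne : ∀ b ∈ l, b ≠ []
  hch : ∀ b ∈ l, b.Chain' H.Adj
  hsz : ∀ b ∈ l, b.length ≤ 2
  hnd : l.flatten.Nodup
  hcov : ∀ v : V, v ∈ l.flatten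

lemma cfg_transfer {H : SimpleGraph V} {l l' : List (List V)} (h : Cfg H l)
    (hmem : ∀ b ∈ l', b ∈ l ∨ b.reverse ∈ l) (hperm : l'.flatten ~ l.flatten) : Cfg H l' where
  hne b hb := by
    rcases hmem b hb with h1 | h1
    · exact h.hne b h1
    · have h2 := h.hne _ h1
      intro hb'
      rw [hb'] at h2
      simp at h2
  hch b hb := by
    rcases hmem b hb with h1 | h1
    · exact h.hch b h1
    · exact ((List.isChain_reverse).1 (h.hch _ h1)).imp (fun a c hab => hab.symm)
  hsz b hb := by
    rcases hmem b hb with h1 | h1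
    · exact h.hsz b h1
    · have h2 := h.hsz _ h1
      rwa [List.length_reverse] at h2
  hnd := hperm.nodup_iff.2 h.hnd
  hcov v := hperm.mem_iff.2 (h.hcov v)

lemma flatten_length_eq_card {l : List (List V)} (hnd : l.flatten.Nodup)
    (hcov : ∀ v : V, v ∈ l.flatten) : l.flatten.length = Fintype.card V := by
  classical
  have h1 : l.flatten.toFinset = Finset.univ :=
    Finset.eq_univ_iff_forall.2 (fun v => List.mem_toFinset.2 (hcov v))
  rw [← List.toFinset_card_of_nodup hnd, h1, Finset.card_univ]

lemma cfg_length {H : SimpleGraph V} {l : List (List V)} (h : Cfg H l) :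
    Fintype.card V ≤ 2 * l.length := by
  have h1 := flatten_length_eq_card h.hnd h.hcov
  have h2 : l.flatten.length ≤ 2 * l.length := by
    rw [List.length_flatten]
    calc (l.map List.length).sum ≤ (l.map List.length).length • 2 :=
          List.sum_le_card_nsmul _ _ (by
            intro x hx
            rw [List.mem_map] at hx
            obtain ⟨b, hb, rfl⟩ := hx
            exact h.hsz b hb)
      _ = 2 * l.length := by rw [List.length_map, smul_eq_mul, Nat.mul_comm]
  omega

lemma reach_zero (G H : SimpleGraph V) (d : ℕ)
    (hdeg : ∀ x : V, ((G.neighborFinset x)ᶜ).card ≤ d)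
    (hcard : 4 * d + 4 < Fintype.card V) :
    ∀ N (l : List (List V)), Cfg H l → badCount G l ≤ N →
      ∃ l', Cfg H l' ∧ (∀ b ∈ l, b ∈ l' ∨ b.reverse ∈ l') ∧ badCount G l' = 0 := by
  intro N
  induction N with
  | zero => exact fun l hc hb => ⟨l, hc, fun b hb' => Or.inl hb', Nat.le_zero.1 hb⟩
  | succ N ih =>
    intro l hc hb
    rcases Nat.eq_zero_or_pos (badCount G l) with h0 | hpos
    · exact ⟨l, hc, fun b hb' => Or.inl hb', h0⟩
    obtain ⟨i, hi⟩ := Finset.card_pos.1 hpos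
    rw [Finset.mem_filter, Finset.mem_range] at hi
    obtain ⟨him, hbadi⟩ := hi
    have hcfg1 : Cfg H (l.rotate (i+1)) :=
      cfg_transfer hc (fun b hb' => Or.inl ((List.rotate_perm l (i+1)).mem_iff.1 hb'))
        ((List.rotate_perm l (i+1)).flatten)
    have hlen1 : (l.rotate (i+1)).length = l.length := List.length_rotate l _
    have hbad1 : bad G (l.rotate (i+1)) ((l.rotate (i+1)).length - 1) := by
      rw [hlen1, bad_rotate G (by omega : l.length - 1 < l.length)]
      rw [show l.length - 1 + (i+1) = l.length + i by omega, Nat.add_mod_left,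
        Nat.mod_eq_of_lt him]
      exact hbadi
    have hm2 : 2 * d + 2 ≤ (l.rotate (i+1)).length := by
      have := cfg_length hcfg1
      omega
    obtain ⟨l2, ht1, ht2, hperm2, hlt⟩ :=
      fix_step G d hdeg (l.rotate (i+1)) hcfg1.hne hcfg1.hnd hm2 hbad1
    have hcfg2 : Cfg H l2 := cfg_transfer hcfg1 ht1 hperm2
    have hcnt : badCount G l2 ≤ N := by
      have heq : badCount G (l.rotate (i+1)) = badCount G l := badCount_rotate G l (i+1)
      omega
    obtain ⟨l', hc', hmem', h0'⟩ := ih l2 hcfg2 hcnt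
    refine ⟨l', hc', ?_, h0'⟩
    intro b hbmem
    have hb1 : b ∈ l.rotate (i+1) := (List.rotate_perm l (i+1)).mem_iff.2 hbmem
    rcases ht2 b hb1 with h2 | h2
    · exact hmem' b h2
    · rcases hmem' _ h2 with h3 | h3
      · exact Or.inr h3
      · rw [List.reverse_reverse] at h3
        exact Or.inl h3

lemma walk_edges_eq {H : SimpleGraph V} {a b : V} (p : H.Walk a b) :
    p.edges = (p.support.zip p.support.tail).map (fun q => s(q.1, q.2)) := by
  induction p with
  | nil => simp
  | @cons u v w h q ih =>
    obtain ⟨t, ht⟩ : ∃ t, q.support = v :: t := ⟨q.support.tail, q.support_eq_cons⟩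
    rw [SimpleGraph.Walk.edges_cons, SimpleGraph.Walk.support_cons, ih, ht]
    simp [List.zip_cons_cons]

lemma pair_mem_zip_of_infix {α : Type*} {x y : α} {L : List α} (h : [x, y] <:+: L) :
    (x, y) ∈ L.zip L.tail := by
  obtain ⟨s, t, rfl⟩ := h
  induction s with
  | nil => simp [List.zip_cons_cons]
  | cons c s ih =>
    simp only [List.cons_append]
    have hne : s ++ [x, y] ++ t ≠ [] := by simp
    obtain ⟨e, r, her⟩ := List.exists_cons_of_ne_nil hne
    rw [her] at ih ⊢
    rw [List.tail_cons] at ih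
    simp only [List.zip_cons_cons, List.tail_cons]
    exact List.mem_cons_of_mem _ ih

lemma edge_mem_of_infix {H : SimpleGraph V} {a b : V} (p : H.Walk a b) {x y : V}
    (h : [x, y] <:+: p.support) : s(x, y) ∈ p.edges := by
  rw [walk_edges_eq, List.mem_map]
  exact ⟨(x, y), pair_mem_zip_of_infix h, rfl⟩

lemma exists_walk_of_chain (H : SimpleGraph V) :
    ∀ (L : List V) (a b : V), L.Chain' H.Adj → L.head? = some a → L.getLast? = some b →
      ∃ w : H.Walk a b, w.support = L := by
  intro L
  induction L with
  | nil => intro a b _ h _; simp at h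
  | cons x L ih =>
    intro a b hch ha hb
    rw [List.head?_cons, Option.some_inj] at ha
    subst ha
    cases L with
    | nil =>
      rw [List.getLast?_singleton, Option.some_inj] at hb
      subst hb
      exact ⟨SimpleGraph.Walk.nil, rfl⟩
    | cons y L' =>
      have hadj : H.Adj x y := (List.isChain_cons_cons.1 hch).1
      have hch' : (y :: L').Chain' H.Adj := (List.isChain_cons_cons.1 hch).2
      have hb' : (y :: L').getLast? = some b := by rwa [List.getLast?_cons_cons] at hb
      obtain ⟨w, hw⟩ := ih y b hch' rfl hb'
      exact ⟨SimpleGraph.Walk.cons hadj w, by rw [SimpleGraph.Walk.support_cons, hw]⟩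

lemma flatten_head? {l : List (List V)} (hl : l ≠ []) (hne : ∀ b ∈ l, b ≠ []) :
    l.flatten.head? = some (hB l 0) := by
  cases l with
  | nil => exact absurd rfl hl
  | cons b r =>
    rw [List.flatten_cons, List.head?_append]
    have h0 : (0:ℕ) < (b::r).length := by simp
    have hsh := some_hB h0 (by rw [List.getElem_cons_zero]; exact hne b (List.mem_cons_self))
    rw [List.getElem_cons_zero] at hsh
    rw [hsh]
    rfl

lemma flatten_getLast? : ∀ {l : List (List V)}, l ≠ [] → (∀ b ∈ l, b ≠ []) →
    l.flatten.getLast? = some (tB l (l.length - 1)) := by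
  intro l
  induction l with
  | nil => intro hl _; exact absurd rfl hl
  | cons b r ih =>
    intro _ hne
    cases r with
    | nil =>
      simp only [List.flatten_cons, List.flatten_nil, List.append_nil, List.length_singleton]
      have h0 : (0:ℕ) < [b].length := by simp
      have hst := some_tB h0 (by rw [List.getElem_cons_zero]; exact hne b (List.mem_cons_self))
      rw [List.getElem_cons_zero] at hst
      exact hst
    | cons c r' =>
      rw [List.flatten_cons, List.getLast?_append]
      have hr : (c :: r') ≠ [] := by simp
      have hih := ih hr (fun b' hb' => hne b' (List.mem_cons_of_mem _ hb'))
      rw [hih]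
      have e1 : (b :: c :: r').length - 1 = ((c :: r').length - 1) + 1 := by simp
      rw [e1]
      have e2 : tB (b :: c :: r') (((c :: r').length - 1) + 1) = tB (c :: r') ((c :: r').length - 1) := by
        simp only [tB, List.getD_cons_succ]
      rw [e2]
      rfl

/-- The final cycle construction from a good cyclic list. -/
lemma cycle_of_list (H : SimpleGraph V) (L : List V) (a z : V)
    (hnd : L.Nodup) (hcov : ∀ v : V, v ∈ L) (hcard5 : 5 ≤ Fintype.card V)
    (hch : L.Chain' H.Adj) (hhead : L.head? = some a) (hlast : L.getLast? = some z)
    (hwz : H.Adj z a) :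
    ∃ c : H.Walk a a, c.IsHamiltonianCycle ∧
      ∀ x y : V, [x, y] <:+: L → s(x, y) ∈ c.edges := by
  classical
  have hlenL : L.length = Fintype.card V := by
    have h1 : L.toFinset = Finset.univ :=
      Finset.eq_univ_iff_forall.2 (fun v => List.mem_toFinset.2 (hcov v))
    rw [← List.toFinset_card_of_nodup hnd, h1, Finset.card_univ]
  obtain ⟨T, rfl⟩ : ∃ T, L = a :: T := by
    cases L with
    | nil => simp at hhead
    | cons w T =>
      rw [List.head?_cons, Option.some_inj] at hhead
      exact ⟨T, by rw [hhead]⟩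
  obtain ⟨t1, T', rfl⟩ : ∃ t1 T', T = t1 :: T' := by
    cases T with
    | nil =>
      exfalso
      rw [List.length_cons, List.length_nil] at hlenL
      omega
    | cons t1 T' => exact ⟨t1, T', rfl⟩
  have hadj : H.Adj a t1 := (List.isChain_cons_cons.1 hch).1
  have hchT : (t1 :: T').Chain' H.Adj := (List.isChain_cons_cons.1 hch).2
  have haT : a ∉ (t1 :: T') := (List.nodup_cons.1 hnd).1
  have hndT : (t1 :: T').Nodup := (List.nodup_cons.1 hnd).2
  set T := t1 :: T' with hTdef
  set L' := T ++ [a] with hL'def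
  have hL'len : L'.length = Fintype.card V := by
    rw [hL'def, List.length_append, List.length_singleton]
    rw [List.length_cons] at hlenL
    omega
  have hTlenL : T.length = Fintype.card V - 1 := by
    rw [List.length_cons] at hlenL
    omega
  have hndL' : L'.Nodup := by
    rw [hL'def, List.nodup_append]
    refine ⟨hndT, List.nodup_singleton a, ?_⟩
    intro x hx y hx'
    rw [List.mem_singleton] at hx'
    exact fun hxy => haT (hx' ▸ hxy ▸ hx)
  have hlastT : T.getLast? = some z := by
    have h1 : (a :: T).getLast? = T.getLast? := by rw [hTdef, List.getLast?_cons_cons]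
    rw [← h1]
    exact hlast
  have hchL' : L'.Chain' H.Adj := by
    rw [hL'def, List.Chain', List.isChain_append]
    refine ⟨hchT, List.isChain_singleton a, ?_⟩
    intro x hx y hy
    rw [Option.mem_def, hlastT, Option.some_inj] at hx
    rw [List.head?_cons, Option.mem_def, Option.some_inj] at hy
    subst hx
    subst hy
    exact hwz
  obtain ⟨p, hp⟩ := exists_walk_of_chain H L' t1 a hchL'
    (by rw [hL'def, hTdef]; rfl)
    (by rw [hL'def, List.getLast?_append]; rfl)
  have hnotmem : s(a, t1) ∉ p.edges := by
    intro hmem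
    rw [walk_edges_eq, hp, List.mem_map] at hmem
    obtain ⟨q, hq, hsym⟩ := hmem
    rw [List.mem_iff_getElem] at hq
    obtain ⟨i, hilen, hqi⟩ := hq
    have hlenzip : i < L'.length - 1 := by
      rw [List.length_zip, List.length_tail] at hilen
      omega
    rw [List.getElem_zip] at hqi
    rw [← hqi] at hsym
    dsimp only at hsym
    rw [List.getElem_tail] at hsym
    have hca : 5 ≤ L'.length := by omega
    have hidxa : L'[L'.length - 1]'(by omega) = a := by
      have h2 : L'.getLast? = some a := by rw [hL'def, List.getLast?_append]; rfl
      rw [List.getLast?_eq_getElem?, List.getElem?_eq_getElem (by omega)] at h2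
      exact (Option.some_inj.1 h2)
    have hidxt : L'[0]'(by omega) = t1 := by
      have h2 : L'.head? = some t1 := by rw [hL'def, hTdef]; rfl
      rw [List.head?_eq_getElem?, List.getElem?_eq_getElem (by omega)] at h2
      exact (Option.some_inj.1 h2)
    rcases Sym2.eq_iff.1 hsym with ⟨h1, h2⟩ | ⟨h1, h2⟩
    · have : i = L'.length - 1 :=
        (List.Nodup.getElem_inj_iff hndL' (i := i) (hi := by omega)
          (j := L'.length - 1) (hj := by omega)).1 (by rw [h1, hidxa])
      omega
    · have hia : i + 1 = L'.length - 1 :=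
        (List.Nodup.getElem_inj_iff hndL' (i := i + 1) (hi := by omega)
          (j := L'.length - 1) (hj := by omega)).1 (by rw [h2, hidxa])
      have hit : i = 0 :=
        (List.Nodup.getElem_inj_iff hndL' (i := i) (hi := by omega)
          (j := 0) (hj := by omega)).1 (by rw [h1, hidxt])
      omega
  set c : H.Walk a a := SimpleGraph.Walk.cons hadj p with hcdef
  have hsupc : c.support = a :: L' := by rw [hcdef, SimpleGraph.Walk.support_cons, hp]
  have hcyc : c.IsCycle := by
    rw [hcdef]
    exact (SimpleGraph.Walk.cons_isCycle_iff p hadj).2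
      ⟨SimpleGraph.Walk.IsPath.mk' (by rw [hp]; exact hndL'), hnotmem⟩
  have hham : c.IsHamiltonianCycle := by
    rw [SimpleGraph.Walk.isHamiltonianCycle_iff_isCycle_and_support_count_tail_eq_one]
    refine ⟨hcyc, ?_⟩
    intro v
    rw [hsupc, List.tail_cons]
    apply List.count_eq_one_of_mem hndL'
    rw [hL'def]
    rcases List.mem_cons.1 (hcov v) with h | h
    · subst h
      exact List.mem_append_right _ (List.mem_singleton_self _)
    · exact List.mem_append_left _ h
  refine ⟨c, hham, ?_⟩
  intro x y hxy
  apply edge_mem_of_infix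
  rw [hsupc]
  have heq : a :: L' = (a :: T) ++ [a] := by rw [hL'def]; rfl
  rw [heq]
  exact hxy.trans (List.prefix_append (a :: T) [a]).isInfix

lemma master (G H : SimpleGraph V) (hGH : G ≤ H) (d : ℕ)
    (hdeg : ∀ x : V, ((G.neighborFinset x)ᶜ).card ≤ d)
    (hcard : 4 * d + 4 < Fintype.card V)
    (l0 : List (List V)) (h0 : Cfg H l0) :
    ∃ (x : V) (c : H.Walk x x), c.IsHamiltonianCycle ∧
      ∀ a b : V, [a, b] ∈ l0 → s(a, b) ∈ c.edges := by
  classical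
  obtain ⟨l, hc, hmem, hz⟩ := reach_zero G H d hdeg hcard (badCount G l0) l0 h0 le_rfl
  have hcard5 : 5 ≤ Fintype.card V := by omega
  have hlenL : l.flatten.length = Fintype.card V := flatten_length_eq_card hc.hnd hc.hcov
  have hLne : l.flatten ≠ [] := by
    intro h
    rw [h, List.length_nil] at hlenL
    omega
  have hlne : l ≠ [] := by
    rintro rfl
    exact hLne rfl
  have hm0 : 0 < l.length := List.length_pos_iff.2 hlne
  have hfe : (Finset.range l.length).filter (bad G l) = ∅ := Finset.card_eq_zero.1 hz
  have hgood : ∀ i, i < l.length → G.Adj (tB l i) (hB l ((i+1) % l.length)) := by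
    intro i hi
    by_contra hcontra
    have hmem2 : i ∈ (Finset.range l.length).filter (bad G l) :=
      Finset.mem_filter.2 ⟨Finset.mem_range.2 hi, hcontra⟩
    rw [hfe] at hmem2
    exact absurd hmem2 (Finset.notMem_empty i)
  have h0nil : [] ∉ l := fun h => hc.hne [] h rfl
  have hchain : l.flatten.Chain' H.Adj := by
    rw [List.Chain', List.isChain_flatten h0nil]
    refine ⟨hc.hch, ?_⟩
    rw [List.isChain_iff_getElem]
    intro i hi x hx y hy
    rw [Option.mem_def, some_tB (by omega) (hc.hne _ (l.getElem_mem _)), Option.some_inj] at hx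
    rw [Option.mem_def, some_hB (by omega) (hc.hne _ (l.getElem_mem _)), Option.some_inj] at hy
    subst hx
    subst hy
    have hg := hgood i (by omega)
    rw [Nat.mod_eq_of_lt (by omega)] at hg
    exact hGH hg
  have hwrap : H.Adj (tB l (l.length - 1)) (hB l 0) := by
    have hg := hgood (l.length - 1) (by omega)
    rw [Nat.sub_add_cancel (by omega), Nat.mod_self] at hg
    exact hGH hg
  obtain ⟨c, hham, hedges⟩ := cycle_of_list H l.flatten (hB l 0) (tB l (l.length - 1))
    hc.hnd hc.hcov hcard5 hchain (flatten_head? hlne hc.hne) (flatten_getLast? hlne hc.hne) hwrap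
  refine ⟨hB l 0, c, hham, ?_⟩
  intro a b hab
  rcases hmem _ hab with h1 | h1
  · exact hedges a b (List.infix_of_mem_flatten h1)
  · have h1' : [b, a] ∈ l := by simpa using h1
    have := hedges b a (List.infix_of_mem_flatten h1')
    rwa [Sym2.eq_swap] at this

end Stmt7Aux

open Stmt7Aux in
/-- Lemma (Fixpair, part 1): in a graph of very high minimum degree `(1-ε₁)n`, for any
`ℓ ≤ ε₂ n` disjoint pairs of vertices, the graph with the pairs added as edges has a
Hamilton cycle through all the added edges. -/
theorem stmt7 : ∃ c : ℝ, 0 < c ∧ ∀ ε₁ ε₂ : ℝ, 0 < ε₁ → ε₁ < c → 0 < ε₂ → ε₂ < c →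
    ∃ n₀ : ℕ, ∀ n : ℕ, n₀ ≤ n → ∀ ℓ : ℕ, (ℓ : ℝ) ≤ ε₂ * n →
    ∀ G : SimpleGraph (Fin n),
    (∀ v : Fin n, (1 - ε₁) * n ≤ ((G.neighborSet v).ncard : ℝ)) →
    ∀ u v : Fin ℓ → Fin n,
    Function.Injective (fun p : Fin ℓ × Bool => if p.2 then u p.1 else v p.1) →
    ∃ (x : Fin n)
      (cyc : (G ⊔ SimpleGraph.fromEdgeSet {e | ∃ i : Fin ℓ, e = s(u i, v i)}).Walk x x),
      cyc.IsHamiltonianCycle ∧ ∀ i : Fin ℓ, s(u i, v i) ∈ cyc.edges := by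
  classical
  refine ⟨1/8, by norm_num, ?_⟩
  intro ε₁ ε₂ hε₁ hε₁c hε₂ hε₂c
  refine ⟨100, ?_⟩
  intro n hn ℓ hℓ G hdeg u v hinj
  have hn0 : 0 < n := by omega
  haveI : Nonempty (Fin n) := ⟨⟨0, hn0⟩⟩
  set H := G ⊔ SimpleGraph.fromEdgeSet {e | ∃ i : Fin ℓ, e = s(u i, v i)} with hH
  set F : Fin ℓ × Bool → Fin n := fun p => if p.2 then u p.1 else v p.1 with hF
  have huv : ∀ i : Fin ℓ, u i ≠ v i := by
    intro i h
    have h1 : F (i, true) = F (i, false) := by simp [hF, h]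
    have h2 := hinj h1
    simp at h2
  have hadjP : ∀ i : Fin ℓ, H.Adj (u i) (v i) := by
    intro i
    rw [hH, SimpleGraph.sup_adj, SimpleGraph.fromEdgeSet_adj]
    exact Or.inr ⟨⟨i, rfl⟩, huv i⟩
  set blocksP : List (List (Fin n)) := (List.finRange ℓ).map (fun i => [u i, v i]) with hblocksP
  have hflatP : blocksP.flatten = ((List.finRange ℓ) ×ˢ [true, false]).map F := by
    rw [hblocksP, ← List.flatMap_def]
    simp only [SProd.sprod, List.product, List.map_flatMap, List.map_cons, List.map_nil, hF]
    rfl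
  have hndP : blocksP.flatten.Nodup := by
    rw [hflatP]
    exact ((List.nodup_finRange ℓ).product (by simp)).map hinj
  set others : List (Fin n) := (List.finRange n).filter (fun w => decide (w ∉ blocksP.flatten))
    with hothers
  set l0 : List (List (Fin n)) := blocksP ++ others.map (fun w => [w]) with hl0
  have hflat0 : l0.flatten = blocksP.flatten ++ others := by
    have h2 : (others.map (fun w => [w])).flatten = others := by
      rw [← List.flatMap_def, List.flatMap_singleton']
    rw [hl0, List.flatten_append, h2]
  have hcfg : Cfg H l0 := by
    constructor
    · intro b hb
      rw [hl0, List.mem_append] at hb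
      rcases hb with hb | hb
      · rw [hblocksP, List.mem_map] at hb
        obtain ⟨i, _, rfl⟩ := hb
        simp
      · rw [List.mem_map] at hb
        obtain ⟨w, _, rfl⟩ := hb
        simp
    · intro b hb
      rw [hl0, List.mem_append] at hb
      rcases hb with hb | hb
      · rw [hblocksP, List.mem_map] at hb
        obtain ⟨i, _, rfl⟩ := hb
        exact List.isChain_pair.2 (hadjP i)
      · rw [List.mem_map] at hb
        obtain ⟨w, _, rfl⟩ := hb
        exact List.isChain_singleton w
    · intro b hb
      rw [hl0, List.mem_append] at hb
      rcases hb with hb | hb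
      · rw [hblocksP, List.mem_map] at hb
        obtain ⟨i, _, rfl⟩ := hb
        simp
      · rw [List.mem_map] at hb
        obtain ⟨w, _, rfl⟩ := hb
        simp
    · rw [hflat0, List.nodup_append]
      refine ⟨hndP, List.Nodup.filter _ (List.nodup_finRange n), ?_⟩
      intro x hx y hx' hxy
      rw [hothers, List.mem_filter, decide_eq_true_eq] at hx'
      exact hx'.2 (hxy ▸ hx)
    · intro w
      rw [hflat0, List.mem_append]
      by_cases hw : w ∈ blocksP.flatten
      · exact Or.inl hw
      · refine Or.inr ?_
        rw [hothers, List.mem_filter, decide_eq_true_eq]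
        exact ⟨List.mem_finRange w, hw⟩
  have hdeg' : ∀ x : Fin n, ((G.neighborFinset x)ᶜ).card ≤ n / 8 := by
    intro x
    set D := (G.neighborFinset x).card with hD
    have hcardeq : (G.neighborSet x).ncard = D := by
      rw [hD, SimpleGraph.neighborFinset_def]
      exact Set.ncard_eq_toFinset_card' _
    have hDn : D ≤ n := by
      calc D ≤ Fintype.card (Fin n) := Finset.card_le_univ _
        _ = n := Fintype.card_fin n
    rw [Finset.card_compl, Fintype.card_fin]
    have hdx := hdeg x
    rw [hcardeq] at hdx
    have hn100 : (100:ℝ) ≤ (n:ℝ) := by exact_mod_cast hn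
    have hr : ((n - D : ℕ) : ℝ) ≤ ε₁ * n := by
      rw [Nat.cast_sub hDn]
      linarith
    have h8 : 8 * (n - D) < n := by
      have hn8 : ε₁ * n < (n:ℝ) / 8 := by nlinarith
      have h2 : (8:ℝ) * ((n - D:ℕ):ℝ) < (n:ℝ) := by linarith
      exact_mod_cast h2
    omega
  have hcard : 4 * (n / 8) + 4 < Fintype.card (Fin n) := by
    rw [Fintype.card_fin]
    omega
  obtain ⟨x, c, hham, hedges⟩ := master G H le_sup_left (n / 8) hdeg' hcard l0 hcfg
  refine ⟨x, c, hham, ?_⟩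
  intro i
  apply hedges
  rw [hl0, List.mem_append, hblocksP]
  exact Or.inl (List.mem_map.2 ⟨i, List.mem_finRange i, rfl⟩)
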